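/- arXiv:q-alg/9505026 — 9 statements merged into one kernel-verified Lean document; each statement's English description precedes it below -/
import Mathlib

section
/- In a finite-dimensional commutative algebra A over a field, for every nonzero element x there exists y in A such that xy is a nonzero element of the socle (the set of elements annihilated by all nilpotent elements of A). -/
/-- In a finite-dimensional commutative algebra over a field, every nonzero `x`
admits `y` such that `x * y` is a nonzero element of the socle (the annihilator
of the nilpotent elements). -/
theorem stmt0 {F A : Type*} [Field F] [CommRing A] [Algebra F A]
    [FiniteDimensional F A] (x : A) (hx : x ≠ 0) :
    ∃ y : A, x * y ≠ 0 ∧ ∀ a : A, IsNilpotent a → a * (x * y) = 0 := by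
  haveI : IsNoetherianRing A :=
    isNoetherianRing_iff.mpr (isNoetherian_of_tower F inferInstance)
  obtain ⟨m, hm⟩ := IsNoetherianRing.isNilpotent_nilradical A
  set N := nilradical A
  set P : ℕ → Prop := fun k => ∃ y ∈ N ^ k, x * y ≠ 0 with hP
  have h0 : P 0 := ⟨1, by simp, by simpa using hx⟩
  have hnotm : ¬ P m := by
    rintro ⟨y, hy, hxy⟩
    rw [hm] at hy
    exact hxy (by simp [Ideal.mem_bot.mp hy])
  classical
  set k := Nat.findGreatest P m with hk
  have hPk : P k := Nat.findGreatest_spec (Nat.zero_le m) h0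
  have hklt : k < m := lt_of_le_of_ne (Nat.findGreatest_le m)
    (fun h => hnotm (h ▸ hPk))
  have hsucc : ¬ P (k + 1) :=
    Nat.findGreatest_is_greatest (Nat.lt_succ_self k) hklt
  obtain ⟨y, hy, hxy⟩ := hPk
  refine ⟨y, hxy, fun a ha => ?_⟩
  have hay : a * y ∈ N ^ (k + 1) := by
    rw [pow_succ']
    exact Ideal.mul_mem_mul (mem_nilradical.mpr ha) hy
  have : x * (a * y) = 0 := by
    by_contra h
    exact hsucc ⟨a * y, hay, h⟩
  calc a * (x * y) = x * (a * y) := by ring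
    _ = 0 := this
end

section
/- Every indecomposable commutative Frobenius algebra over an algebraically closed field is either one-dimensional, or is a local algebra with nonzero nilpotents whose socle is one-dimensional. -/
open Polynomial Module

/-- Key lemma: in an indecomposable finite-dimensional commutative algebra over an
algebraically closed field, every element is a scalar plus a nilpotent. -/
lemma key_scalar_plus_nilpotent {F A : Type*} [Field F] [IsAlgClosed F] [CommRing A]
    [Algebra F A] [FiniteDimensional F A] [Nontrivial A]
    (hindec : ¬ ∃ A₁ A₂ : Ideal A, A₁ ≠ ⊥ ∧ A₂ ≠ ⊥ ∧ A₁ ⊔ A₂ = ⊤ ∧ A₁ ⊓ A₂ = ⊥ ∧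
      ∀ x ∈ A₁, ∀ y ∈ A₂, x * y = 0) (a : A) :
    ∃ c : F, IsNilpotent (a - algebraMap F A c) := by
  have hint : IsIntegral F a := Algebra.IsIntegral.isIntegral a
  set p := minpoly F a with hp
  have hmon : p.Monic := minpoly.monic hint
  have hp0 : p ≠ 0 := hmon.ne_zero
  have hdeg : 0 < p.natDegree := minpoly.natDegree_pos hint
  obtain ⟨c, hc⟩ : ∃ c, p.IsRoot c := by
    refine IsAlgClosed.exists_root p ?_
    intro h
    rw [Polynomial.degree_eq_natDegree hp0] at h
    exact_mod_cast hdeg.ne' (by exact_mod_cast h)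
  set k := p.rootMultiplicity c with hk
  have hkpos : 0 < k := (Polynomial.rootMultiplicity_pos hp0).mpr hc
  set f : F[X] := (X - C c) ^ k with hf
  set q : F[X] := p /ₘ f with hq
  have hfq : f * q = p := Polynomial.pow_mul_divByMonic_rootMultiplicity_eq p c
  have hfmon : f.Monic := (monic_X_sub_C c).pow k
  have hqmon : q.Monic := hfmon.of_mul_monic_left (by rwa [hfq])
  have hqc : ¬ q.IsRoot c := Polynomial.eval_divByMonic_pow_rootMultiplicity_ne_zero c hp0
  have hfd : f.natDegree = k := by
    rw [hf, Polynomial.natDegree_pow, Polynomial.natDegree_X_sub_C, mul_one]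
  have hpd : p.natDegree = k + q.natDegree := by
    rw [← hfq, Polynomial.natDegree_mul hfmon.ne_zero hqmon.ne_zero, hfd]
  by_cases hq0 : q.natDegree = 0
  · -- q = 1, so p = (X - C c)^k and a - c is nilpotent
    have hq1 : q = 1 := hqmon.natDegree_eq_zero.mp hq0
    have hpow : p = (X - C c) ^ k := by rw [← hfq, hq1, mul_one]
    refine ⟨c, k, ?_⟩
    have h2 : aeval a p = 0 := minpoly.aeval F a
    rw [hpow] at h2
    simpa [map_pow, map_sub, aeval_X, aeval_C] using h2
  · -- both factors nonconstant: build a decomposition, contradiction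
    exfalso
    have hcop : IsCoprime f q := by
      have hndvd : ¬ (X - C c) ∣ q := by
        rw [Polynomial.dvd_iff_isRoot]; exact hqc
      exact ((Polynomial.irreducible_X_sub_C c).coprime_iff_not_dvd.mpr hndvd).pow_left
    obtain ⟨u, v, huv⟩ := hcop
    have hfa : aeval a f ≠ 0 := by
      intro h
      have hdvd : p ∣ f := minpoly.dvd F a h
      have := Polynomial.natDegree_le_of_dvd hdvd hfmon.ne_zero
      omega
    have hqa : aeval a q ≠ 0 := by
      intro h
      have hdvd : p ∣ q := minpoly.dvd F a h
      have := Polynomial.natDegree_le_of_dvd hdvd hqmon.ne_zero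
      omega
    have hprod : aeval a f * aeval a q = 0 := by
      rw [← map_mul, hfq]; exact minpoly.aeval F a
    have hone : aeval a u * aeval a f + aeval a v * aeval a q = 1 := by
      have := congrArg (aeval a) huv
      simpa [map_add, map_mul] using this
    apply hindec
    refine ⟨Ideal.span {aeval a f}, Ideal.span {aeval a q}, ?_, ?_, ?_, ?_, ?_⟩
    · simp [Ideal.span_singleton_eq_bot, hfa]
    · simp [Ideal.span_singleton_eq_bot, hqa]
    · rw [Ideal.eq_top_iff_one, ← hone]
      exact Submodule.add_mem_sup
        (Ideal.mul_mem_left _ _ (Ideal.subset_span rfl))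
        (Ideal.mul_mem_left _ _ (Ideal.subset_span rfl))
    · rw [eq_bot_iff]
      rintro x ⟨hx1, hx2⟩
      obtain ⟨s, hs⟩ := Ideal.mem_span_singleton'.mp hx1
      obtain ⟨t, ht⟩ := Ideal.mem_span_singleton'.mp hx2
      have hx0 : x = (t * aeval a q) * (aeval a u * aeval a f) +
          (s * aeval a f) * (aeval a v * aeval a q) := by
        rw [ht, hs, ← mul_add, hone, mul_one]
      have hz : (t * aeval a q) * (aeval a u * aeval a f) +
          (s * aeval a f) * (aeval a v * aeval a q) = 0 := by
        rw [show (t * aeval a q) * (aeval a u * aeval a f) +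
            (s * aeval a f) * (aeval a v * aeval a q)
            = (t * aeval a u + s * aeval a v) * (aeval a f * aeval a q) by ring,
          hprod, mul_zero]
      rw [hx0, hz]
      exact Submodule.zero_mem ⊥
    · intro x hx y hy
      obtain ⟨s, hs⟩ := Ideal.mem_span_singleton'.mp hx
      obtain ⟨t, ht⟩ := Ideal.mem_span_singleton'.mp hy
      rw [← hs, ← ht,
        show s * aeval a f * (t * aeval a q) = s * t * (aeval a f * aeval a q) by ring,
        hprod, mul_zero]

/-- Every indecomposable commutative Frobenius algebra over an algebraically closed
field is either one-dimensional, or a local algebra (spanned by `1` and nilpotents)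
with a nonzero nilpotent and a one-dimensional socle. -/
theorem stmt3 {F A : Type*} [Field F] [IsAlgClosed F] [CommRing A] [Algebra F A]
    [FiniteDimensional F A] [Nontrivial A]
    (μ : A →ₗ[F] F) (hnd : ∀ x : A, x ≠ 0 → ∃ y : A, μ (x * y) ≠ 0)
    (hindec : ¬ ∃ A₁ A₂ : Ideal A, A₁ ≠ ⊥ ∧ A₂ ≠ ⊥ ∧ A₁ ⊔ A₂ = ⊤ ∧ A₁ ⊓ A₂ = ⊥ ∧
      ∀ x ∈ A₁, ∀ y ∈ A₂, x * y = 0) :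
    Module.finrank F A = 1 ∨
    ((∃ n : A, n ≠ 0 ∧ IsNilpotent n) ∧
     (∀ a : A, ∃ (c : F) (n : A), IsNilpotent n ∧ a = algebraMap F A c + n) ∧
     (∃ s : A, s ≠ 0 ∧ (∀ a : A, IsNilpotent a → a * s = 0) ∧
       ∀ t : A, (∀ a : A, IsNilpotent a → a * t = 0) → ∃ c : F, t = c • s)) := by
  classical
  have key := key_scalar_plus_nilpotent (F := F) hindec
  set B : LinearMap.BilinForm F A := (LinearMap.mul F A).compr₂ μ with hB
  have hBapp : ∀ x y : A, B x y = μ (x * y) := fun x y => rfl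
  have hBnd : B.Nondegenerate := by
    refine ⟨fun x hx => ?_, fun x hx => ?_⟩
    · by_contra h
      obtain ⟨y, hy⟩ := hnd x h
      exact hy (hx y)
    · by_contra h
      obtain ⟨y, hy⟩ := hnd x h
      exact hy (by rw [mul_comm]; exact hx y)
  have hBrefl : B.IsRefl := by
    intro x y h
    rw [hBapp, mul_comm]
    exact h
  set N : Submodule F A := Submodule.restrictScalars F (nilradical A) with hN
  have hNmem : ∀ x : A, x ∈ N ↔ IsNilpotent x := fun x => mem_nilradical
  have hsup : Submodule.span F {(1:A)} ⊔ N = ⊤ := by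
    rw [eq_top_iff]
    rintro a -
    obtain ⟨c, hc⟩ := key a
    have ha : a = c • (1:A) + (a - algebraMap F A c) := by
      rw [Algebra.smul_def, mul_one]; ring
    rw [ha]
    exact Submodule.add_mem_sup
      (Submodule.smul_mem _ _ (Submodule.mem_span_singleton_self 1))
      ((hNmem _).mpr hc)
  have hinf : Submodule.span F {(1:A)} ⊓ N = ⊥ := by
    rw [eq_bot_iff]
    rintro x ⟨hx1, hx2⟩
    obtain ⟨c, hc⟩ := Submodule.mem_span_singleton.mp hx1
    obtain ⟨m, hm⟩ := (hNmem x).mp hx2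
    have hx : x = algebraMap F A c := by rw [← hc, Algebra.smul_def, mul_one]
    rw [hx] at hm
    have hcm : c ^ m = 0 := by
      apply RingHom.injective (algebraMap F A)
      rw [map_pow, map_zero]
      exact hm
    have hc0 : c = 0 := (pow_eq_zero_iff'.mp hcm).1
    simp [← hc, hc0]
  have hrank : Module.finrank F A = 1 + Module.finrank F N := by
    have h := Submodule.finrank_sup_add_finrank_inf_eq (Submodule.span F {(1:A)}) N
    rw [hsup, hinf, finrank_top, finrank_bot, add_zero,
      finrank_span_singleton (one_ne_zero : (1:A) ≠ 0)] at h
    omega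
  by_cases h1 : Module.finrank F A = 1
  · exact Or.inl h1
  right
  set S := B.orthogonal N with hS
  have hSmem : ∀ t : A, t ∈ S ↔ ∀ a : A, IsNilpotent a → a * t = 0 := by
    intro t
    constructor
    · intro ht a ha
      refine hBnd.1 _ (fun y => ?_)
      have hay : a * y ∈ N := (hNmem _).mpr (Commute.isNilpotent_mul_right (Commute.all a y) ha)
      have := ht (a * y) hay
      rw [hBapp] at this ⊢
      rw [show a * t * y = a * y * t by ring]
      exact this
    · intro ht n hn
      rw [hBapp, ht n ((hNmem n).mp hn), map_zero]
  have hSrank : Module.finrank F S = 1 := by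
    have h := LinearMap.BilinForm.finrank_orthogonal hBnd N
    rw [← hS] at h
    omega
  have : Nontrivial S := by
    apply Module.nontrivial_of_finrank_pos (R := F)
    omega
  obtain ⟨s, hs0⟩ := exists_ne (0 : S)
  have hsne : (s : A) ≠ 0 := fun h => hs0 (Subtype.ext h)
  refine ⟨?_, ?_, (s : A), hsne, (hSmem s).mp s.2, ?_⟩
  · by_contra h
    push_neg at h
    have hN0 : N = ⊥ := by
      rw [eq_bot_iff]
      intro x hx
      rcases eq_or_ne x 0 with rfl | hx0
      · exact Submodule.zero_mem ⊥
      · exact absurd ((hNmem x).mp hx) (h x hx0)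
    rw [hN0, finrank_bot] at hrank
    omega
  · intro a
    obtain ⟨c, hc⟩ := key a
    exact ⟨c, a - algebraMap F A c, hc, by ring⟩
  · intro t ht
    have htS : t ∈ S := (hSmem t).mpr ht
    have hle : Submodule.span F {(s : A)} ≤ S := by
      rw [Submodule.span_le, Set.singleton_subset_iff]
      exact s.2
    have hspan : Submodule.span F {(s : A)} = S := by
      apply Submodule.eq_of_le_of_finrank_le hle
      rw [hSrank, finrank_span_singleton hsne]
    rw [← hspan] at htS
    obtain ⟨c, hc⟩ := Submodule.mem_span_singleton.mp htS
    exact ⟨c, hc.symm⟩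
end

section
/- In a commutative Frobenius algebra (A, μ) with nonzero nilradical, the socle (annihilator of the nilradical) is nonzero, and if A is indecomposable then the socle is one-dimensional. -/
open Module

/-- In a commutative Frobenius algebra with nonzero nilradical, the socle
(annihilator of the nilpotent elements) is nonzero; and if moreover the algebra is
indecomposable, the socle is one-dimensional. -/
theorem stmt4 {F A : Type*} [Field F] [IsAlgClosed F] [CommRing A] [Algebra F A]
    [FiniteDimensional F A]
    (μ : A →ₗ[F] F) (hnd : ∀ x : A, x ≠ 0 → ∃ y : A, μ (x * y) ≠ 0)
    (hnil : ∃ n : A, n ≠ 0 ∧ IsNilpotent n) :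
    (∃ s : A, s ≠ 0 ∧ ∀ a : A, IsNilpotent a → a * s = 0) ∧
    ((¬ ∃ A₁ A₂ : Ideal A, A₁ ≠ ⊥ ∧ A₂ ≠ ⊥ ∧ A₁ ⊔ A₂ = ⊤ ∧ A₁ ⊓ A₂ = ⊥ ∧
        ∀ x ∈ A₁, ∀ y ∈ A₂, x * y = 0) →
      ∃ s : A, s ≠ 0 ∧ (∀ a : A, IsNilpotent a → a * s = 0) ∧
        ∀ t : A, (∀ a : A, IsNilpotent a → a * t = 0) → ∃ c : F, t = c • s) := by
  classical
  obtain ⟨n₀, hn₀, hn₀nil⟩ := hnil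
  haveI : Nontrivial A := nontrivial_of_ne n₀ 0 hn₀
  haveI : IsNoetherianRing A := isNoetherian_of_tower F inferInstance
  haveI : IsArtinianRing A := isArtinian_of_tower F inferInstance
  set N : Ideal A := nilradical A with hN
  -- Part 1: the socle is nonzero
  have hexp : ∃ k, N ^ k = 0 := IsNoetherianRing.isNilpotent_nilradical A
  set k := Nat.find hexp with hk
  have hk0 : N ^ k = 0 := Nat.find_spec hexp
  have hkpos : 0 < k := by
    rcases Nat.eq_zero_or_pos k with h | h
    · rw [h, pow_zero, Ideal.one_eq_top] at hk0
      have h1 : (1 : A) ∈ (0 : Ideal A) := hk0 ▸ Submodule.mem_top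
      simp [Ideal.zero_eq_bot, Ideal.mem_bot] at h1
    · exact h
  have hkm : N ^ (k - 1) ≠ 0 := Nat.find_min hexp (by omega)
  obtain ⟨s, hsmem, hs0⟩ := (Submodule.ne_bot_iff _).mp (by simpa [Ideal.zero_eq_bot] using hkm)
  have hann : ∀ a : A, IsNilpotent a → a * s = 0 := by
    intro a ha
    have haN : a ∈ N := mem_nilradical.mpr ha
    have hmem : a * s ∈ N * N ^ (k - 1) := Ideal.mul_mem_mul haN hsmem
    rw [← pow_succ' N (k - 1), Nat.sub_add_cancel (by omega)] at hmem
    rw [hk0, Ideal.zero_eq_bot] at hmem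
    exact (Ideal.mem_bot).mp hmem
  refine ⟨⟨s, hs0, hann⟩, fun hind => ?_⟩
  -- Part 2: no nontrivial idempotents
  have hidem : ∀ e : A, IsIdempotentElem e → e = 0 ∨ e = 1 := by
    intro e he
    by_contra h
    push_neg at h
    obtain ⟨h0, h1⟩ := h
    apply hind
    refine ⟨Ideal.span {e}, Ideal.span {1 - e}, ?_, ?_, ?_, ?_, ?_⟩
    · simpa [Ideal.span_singleton_eq_bot] using h0
    · simp only [Ne, Ideal.span_singleton_eq_bot, sub_eq_zero]
      exact fun hh => h1 hh.symm
    · rw [eq_top_iff]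
      intro x _
      have hx : x = x * e + x * (1 - e) := by ring
      rw [hx]
      exact Submodule.add_mem_sup
        (Ideal.mul_mem_left _ x (Ideal.subset_span rfl))
        (Ideal.mul_mem_left _ x (Ideal.subset_span rfl))
    · rw [eq_bot_iff]
      intro x hx
      obtain ⟨hx1, hx2⟩ := Submodule.mem_inf.mp hx
      obtain ⟨a, rfl⟩ := Ideal.mem_span_singleton'.mp hx1
      obtain ⟨b, hb⟩ := Ideal.mem_span_singleton'.mp hx2
      have : a * e = a * e * e := by rw [mul_assoc, he.eq]
      rw [this, ← hb]
      have : b * (1 - e) * e = 0 := by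
        rw [mul_assoc, sub_mul, one_mul, he.eq, sub_self, mul_zero]
      rw [this]
      exact Submodule.zero_mem ⊥
    · intro x hx y hy
      obtain ⟨a, rfl⟩ := Ideal.mem_span_singleton'.mp hx
      obtain ⟨b, rfl⟩ := Ideal.mem_span_singleton'.mp hy
      have h2 : e * (1 - e) = 0 := by
        rw [mul_sub, mul_one, he.eq, sub_self]
      calc a * e * (b * (1 - e)) = (a * b) * (e * (1 - e)) := by ring
        _ = 0 := by rw [h2, mul_zero]
  -- the maximal spectrum is a singleton
  haveI hsub : Subsingleton {I : Ideal A | I.IsMaximal} := by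
    by_contra hns
    rw [not_subsingleton_iff_nontrivial] at hns
    obtain ⟨i, j, hij⟩ := exists_pair_ne {I : Ideal A | I.IsMaximal}
    set eqp := IsArtinianRing.quotNilradicalEquivPi A with heqp
    let f : ∀ I : MaximalSpectrum A, A ⧸ I.asIdeal := fun I => if I.asIdeal = i.1 then 1 else 0
    have hf : IsIdempotentElem f := by
      show f * f = f
      funext I
      by_cases hI : I.asIdeal = i.1 <;> simp [f, hI]
    have hfe : IsIdempotentElem (eqp.symm f) := by
      show eqp.symm f * eqp.symm f = eqp.symm f
      rw [← map_mul, hf.eq]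
    obtain ⟨e', he', hmk⟩ := exists_isIdempotentElem_eq_of_ker_isNilpotent
      (Ideal.Quotient.mk N)
      (fun x hx => by
        rwa [RingHom.mem_ker, Ideal.Quotient.eq_zero_iff_mem, mem_nilradical] at hx)
      (eqp.symm f)
      (RingHom.mem_range.mpr (Ideal.Quotient.mk_surjective _)) hfe
    haveI : Nontrivial (A ⧸ (i : {I : Ideal A | I.IsMaximal}).1) :=
      Ideal.Quotient.nontrivial_iff.mpr i.2.ne_top
    haveI : Nontrivial (A ⧸ (j : {I : Ideal A | I.IsMaximal}).1) :=
      Ideal.Quotient.nontrivial_iff.mpr j.2.ne_top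
    rcases hidem e' he' with rfl | rfl
    · rw [map_zero] at hmk
      have hf0 : f = 0 := by
        have := congrArg eqp hmk
        rw [map_zero, AlgEquiv.apply_symm_apply] at this
        exact this.symm
      have := congrFun hf0 ⟨i.1, i.2⟩
      simp only [f, if_pos rfl] at this
      exact one_ne_zero this
    · rw [map_one] at hmk
      have hf1 : f = 1 := by
        have := congrArg eqp hmk
        rw [map_one, AlgEquiv.apply_symm_apply] at this
        exact this.symm
      have := congrFun hf1 ⟨j.1, j.2⟩
      rw [Pi.one_apply] at this
      simp only [f, if_neg (fun h : j.1 = i.1 => hij (Subtype.ext h).symm)] at this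
      exact zero_ne_one this
  -- N is the unique maximal ideal
  obtain ⟨m, hm⟩ := Ideal.exists_maximal A
  have hNm : N = m := by
    apply le_antisymm
    · haveI := hm.isPrime
      exact nilradical_le_prime m
    · rw [hN, nilradical_eq_sInf]
      refine le_sInf fun p hp => ?_
      haveI : p.IsPrime := hp
      have hpmax : p.IsMaximal := IsArtinianRing.isMaximal_of_isPrime p
      have heq : (⟨p, hpmax⟩ : {I : Ideal A | I.IsMaximal}) = ⟨m, hm⟩ :=
        Subsingleton.elim _ _
      exact (Subtype.ext_iff.mp heq).ge
  haveI hNmax : N.IsMaximal := hNm ▸ hm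
  letI : Field (A ⧸ N) := Ideal.Quotient.field N
  haveI : Module.Finite F (A ⧸ N) :=
    Module.Finite.of_surjective (Ideal.Quotient.mkₐ F N).toLinearMap
      (Ideal.Quotient.mkₐ_surjective F N)
  haveI : Algebra.IsIntegral F (A ⧸ N) := Algebra.IsIntegral.of_finite F (A ⧸ N)
  have hsurjB : Function.Surjective (algebraMap F (A ⧸ N)) :=
    IsAlgClosed.algebraMap_bijective_of_isIntegral.2
  have hfin1 : finrank F (A ⧸ N) = 1 := by
    have hbij : Function.Bijective (Algebra.linearMap F (A ⧸ N)) :=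
      ⟨fun a b h => (algebraMap F (A ⧸ N)).injective h, hsurjB⟩
    have := LinearEquiv.finrank_eq (LinearEquiv.ofBijective _ hbij)
    rw [finrank_self] at this
    exact this.symm
  -- rank computations
  set N' : Submodule F A := N.restrictScalars F with hN'
  have hker : LinearMap.ker (Ideal.Quotient.mkₐ F N).toLinearMap = N' := by
    ext x
    simp [LinearMap.mem_ker, Ideal.Quotient.eq_zero_iff_mem, hN',
      Submodule.restrictScalars_mem]
  have hrank : 1 + finrank F N' = finrank F A := by
    have h := LinearMap.finrank_range_add_finrank_ker (Ideal.Quotient.mkₐ F N).toLinearMap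
    have hrg : LinearMap.range (Ideal.Quotient.mkₐ F N).toLinearMap = ⊤ :=
      LinearMap.range_eq_top.mpr (Ideal.Quotient.mkₐ_surjective F N)
    rw [hker, hrg, finrank_top, hfin1] at h
    exact h
  -- the bilinear form
  set Bf : A →ₗ[F] Module.Dual F A := (LinearMap.mul F A).compr₂ μ with hBfdef
  have hBf : ∀ x y : A, Bf x y = μ (x * y) := fun x y => rfl
  have hinj : Function.Injective Bf := by
    rw [← LinearMap.ker_eq_bot]
    refine LinearMap.ker_eq_bot'.mpr fun x hx => ?_
    by_contra h
    obtain ⟨y, hy⟩ := hnd x h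
    apply hy
    have : Bf x y = 0 := by rw [hx]; rfl
    rwa [hBf] at this
  have hsurj : Function.Surjective Bf :=
    (LinearMap.injective_iff_surjective_of_finrank_eq_finrank
      (Subspace.dual_finrank_eq (K := F) (V := A)).symm).mp hinj
  set eqv : A ≃ₗ[F] Module.Dual F A := LinearEquiv.ofBijective Bf ⟨hinj, hsurj⟩ with heqv
  set S : Submodule F A := (N'.dualAnnihilator).comap Bf with hSdef
  have hmemS : ∀ x : A, x ∈ S ↔ ∀ a : A, IsNilpotent a → a * x = 0 := by
    intro x
    rw [hSdef, Submodule.mem_comap, Submodule.mem_dualAnnihilator]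
    constructor
    · intro h a ha
      by_contra hax
      obtain ⟨z, hz⟩ := hnd _ hax
      apply hz
      have haz : a * z ∈ N' := by
        rw [hN', Submodule.restrictScalars_mem]
        exact Ideal.mul_mem_right z N (mem_nilradical.mpr ha)
      have h0 := h (a * z) haz
      rw [hBf] at h0
      rw [show a * x * z = x * (a * z) by ring]
      exact h0
    · intro h w hw
      rw [hBf]
      have hwn : IsNilpotent w := mem_nilradical.mp ((Submodule.restrictScalars_mem F N w).mp hw)
      rw [mul_comm, h w hwn, map_zero]
  have hS1 : finrank F S = 1 := by
    have h1 : S = Submodule.map (eqv.symm : Module.Dual F A →ₗ[F] A) N'.dualAnnihilator :=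
      Submodule.comap_equiv_eq_map_symm eqv N'.dualAnnihilator
    rw [h1]
    have hmap : finrank F (Submodule.map (eqv.symm : Module.Dual F A →ₗ[F] A) N'.dualAnnihilator)
        = finrank F N'.dualAnnihilator :=
      eqv.symm.finrank_map_eq N'.dualAnnihilator
    rw [hmap]
    have h2 : finrank F (A ⧸ N') = finrank F N'.dualAnnihilator :=
      LinearEquiv.finrank_eq (Subspace.quotEquivAnnihilator N')
    have h3 := Submodule.finrank_quotient_add_finrank N'
    omega
  have hsS : s ∈ S := (hmemS s).mpr hann
  have hspan : Submodule.span F {s} = S := by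
    apply Submodule.eq_of_le_of_finrank_le
    · rw [Submodule.span_le, Set.singleton_subset_iff]
      exact hsS
    · rw [hS1, finrank_span_singleton hs0]
  refine ⟨s, hs0, hann, fun t ht => ?_⟩
  have htS : t ∈ Submodule.span F {s} := hspan.symm ▸ (hmemS t).mpr ht
  obtain ⟨c, hc⟩ := Submodule.mem_span_singleton.mp htS
  exact ⟨c, hc.symm⟩
end

section
/- Let A be a finite-dimensional commutative local Frobenius algebra over an algebraically closed field with functional μ, one-dimensional socle spanned by s with μ(s) = 1. Let N₁ ⊂ N₂ ⊂ ⋯ ⊂ N_n = A be the chain of ideals where N₁ is the socle and N_k is the preimage in A of the socle of A/N_{k-1}. If (a_i) is a basis of A adapted to this filtration (restricting to a basis of each N_k) and (b_i) is the dual basis with respect to the pairing μ(ab), then a_i b_i = s for every i. -/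
section Aux

variable {F A : Type*} [Field F] [CommRing A] [Algebra F A]

/-- Product of `k` elements of an ideal lies in the `k`-th power of the ideal. -/
lemma aux_prod_mem_pow (I : Ideal A) :
    ∀ (k : ℕ) (f : Fin k → A), (∀ j, f j ∈ I) → (∏ j, f j) ∈ I ^ k := by
  intro k
  induction k with
  | zero => intro f _; simp [Ideal.one_eq_top]
  | succ n ih =>
      intro f hf
      rw [Fin.prod_univ_succ, pow_succ']
      exact Ideal.mul_mem_mul (hf 0) (ih _ fun j => hf j.succ)

end Aux

/-- Local commutative Frobenius algebra with one-dimensional socle `F·s`, `μ s = 1`.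
Let `N k` be the chain of ideals with `N 1` the socle and `N k` the preimage of the
socle of `A / N (k-1)` (equivalently, the annihilator of products of `k` nilpotents).
If the basis `(a i)` is adapted to this filtration (it restricts to a basis of each
`N k`) and `(b i)` is the dual basis for the pairing `μ (a * b)`, then
`a i * b i = s` for every `i`. -/
theorem stmt6 {F A : Type*} [Field F] [IsAlgClosed F] [CommRing A] [Algebra F A]
    [FiniteDimensional F A]
    (μ : A →ₗ[F] F) (hnd : ∀ x : A, x ≠ 0 → ∃ y : A, μ (x * y) ≠ 0)
    (hloc : ∀ a : A, ∃ (c : F) (n : A), IsNilpotent n ∧ a = algebraMap F A c + n)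
    (s : A) (hs : s ≠ 0) (hssoc : ∀ a : A, IsNilpotent a → a * s = 0)
    (hsdim : ∀ t : A, (∀ a : A, IsNilpotent a → a * t = 0) → ∃ c : F, t = c • s)
    (hμs : μ s = 1)
    (N : ℕ → Submodule F A)
    (hNdef : ∀ (k : ℕ) (x : A), x ∈ N k ↔
      ∀ f : Fin k → A, (∀ i, IsNilpotent (f i)) → (∏ i, f i) * x = 0)
    {ι : Type*} [Fintype ι] [DecidableEq ι] (a : Module.Basis ι F A) (b : ι → A)
    (hdual : ∀ i j, μ (a i * b j) = if i = j then 1 else 0)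
    (hadapt : ∀ (k : ℕ) (x : A), x ∈ N k →
      x ∈ Submodule.span F {y : A | ∃ i, y = a i ∧ a i ∈ N k}) :
    ∀ i, a i * b i = s := by
  classical
  -- the Frobenius bilinear form
  set B : LinearMap.BilinForm F A := (LinearMap.mul F A).compr₂ μ with hBdef
  have hBapp : ∀ x y : A, B x y = μ (x * y) := fun x y => rfl
  have hsymm : B.IsSymm := by
    refine LinearMap.BilinForm.isSymm_def.mpr ?_
    intro x y
    simp only [RingHom.id_apply, hBapp, mul_comm]
  have hrefl : B.IsRefl := hsymm.isRefl
  have hnondeg : B.Nondegenerate := by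
    refine ⟨?_, fun y hy => ?_⟩
    intro x hx
    by_contra hx0
    obtain ⟨y, hy⟩ := hnd x hx0
    exact hy (hx y)
    by_contra hy0
    obtain ⟨x, hx⟩ := hnd y hy0
    exact hx (by rw [mul_comm, ← hBapp]; exact hy x)
  -- zero-product lemma from `hnd`
  have hzero : ∀ x : A, (∀ y : A, μ (x * y) = 0) → x = 0 := by
    intro x hx
    by_contra hx0
    obtain ⟨y, hy⟩ := hnd x hx0
    exact hy (hx y)
  -- N 0 = ⊥
  have hN0 : ∀ x : A, x ∈ N 0 → x = 0 := by
    intro x hx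
    have := (hNdef 0 x).mp hx Fin.elim0 (fun j => j.elim0)
    simpa using this
  -- the filtration by products of nilpotents
  set M : ℕ → Submodule F A := fun k =>
    match k with
    | 0 => ⊤
    | k + 1 => Submodule.span F
        {x : A | ∃ f : Fin (k + 1) → A, (∀ i, IsNilpotent (f i)) ∧ x = ∏ i, f i}
    with hMdef
  -- elements of `M k` kill elements of `N k`
  have hMkill : ∀ (k : ℕ) (x : A), x ∈ N k → ∀ y ∈ M k, y * x = 0 := by
    intro k x hx y hy
    match k with
    | 0 => rw [hN0 x hx, mul_zero]
    | k + 1 =>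
      have hle : M (k + 1) ≤ LinearMap.ker (LinearMap.mulRight F x) := by
        show Submodule.span F _ ≤ _
        refine Submodule.span_le.mpr ?_
        rintro z ⟨f, hf, rfl⟩
        simpa using (hNdef (k + 1) x).mp hx f hf
      simpa using hle hy
  -- multiplying by a nilpotent raises the level
  have hstep : ∀ (k : ℕ) (y : A), y ∈ M k → ∀ n : A, IsNilpotent n →
      n * y ∈ M (k + 1) := by
    intro k y hy n hn
    match k with
    | 0 =>
      refine Submodule.subset_span ⟨fun _ => n * y, fun _ => ?_, ?_⟩
      · obtain ⟨m, hm⟩ := hn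
        exact ⟨m, by rw [mul_pow, hm, zero_mul]⟩
      · simp [Fin.prod_univ_one]
    | k + 1 =>
      have hmap : Submodule.map (LinearMap.mulLeft F n) (M (k + 1)) ≤ M (k + 2) := by
        show Submodule.map _ (Submodule.span F _) ≤ Submodule.span F _
        rw [Submodule.map_span, Submodule.span_le]
        rintro z ⟨w, ⟨f, hf, rfl⟩, rfl⟩
        refine Submodule.subset_span ⟨Fin.cons n f, ?_, ?_⟩
        · intro j
          refine Fin.cases (by simpa using hn) (fun j' => by simpa using hf j') j
        · simp [Fin.prod_cons]
      exact hmap ⟨y, hy, rfl⟩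
  -- `N k` is the orthogonal complement of `M k`
  have hNorth : ∀ k : ℕ, N k = B.orthogonal (M k) := by
    intro k
    ext x
    constructor
    · intro hx
      rw [LinearMap.BilinForm.mem_orthogonal_iff]
      intro y hy
      show B y x = 0
      rw [hBapp, hMkill k x hx y hy, map_zero]
    · intro hx
      match k with
      | 0 =>
        -- orthogonal of ⊤ is the kernel of the form
        have hx0 : x = 0 := by
          refine hzero x fun y => ?_
          have h1 : B y x = 0 := hx y Submodule.mem_top
          rw [hBapp, mul_comm y x] at h1
          exact h1
        rw [hx0]
        exact (N 0).zero_mem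
      | k + 1 =>
        rw [hNdef]
        intro f hf
        refine hzero _ fun y => ?_
        set g : Fin (k + 1) → A := Fin.cons (f 0 * y) (fun j => f j.succ) with hgdef
        have hgnil : ∀ j, IsNilpotent (g j) := by
          intro j
          refine Fin.cases ?_ (fun j' => by simpa [hgdef] using hf j'.succ) j
          · rw [hgdef, Fin.cons_zero]
            obtain ⟨m, hm⟩ := hf 0
            exact ⟨m, by rw [mul_pow, hm, zero_mul]⟩
        have hmem : (∏ j, g j) ∈ M (k + 1) :=
          Submodule.subset_span ⟨g, hgnil, rfl⟩
        have h0 : B (∏ j, g j) x = 0 := hx _ hmem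
        rw [hBapp] at h0
        have hg : (∏ j, g j) = (f 0 * y) * ∏ j : Fin k, f j.succ := by
          rw [hgdef]; exact Fin.prod_cons _ _
        have hf' : (∏ j, f j) = f 0 * ∏ j : Fin k, f j.succ := Fin.prod_univ_succ f
        calc μ ((∏ j, f j) * x * y) = μ ((∏ j, g j) * x) := by
              rw [hg, hf']; congr 1; ring
          _ = 0 := h0
  -- the filtration is exhaustive
  have : IsNoetherianRing A := isNoetherian_of_tower F inferInstance
  obtain ⟨nd, hnd0⟩ := IsNoetherianRing.isNilpotent_nilradical A
  have hprod0 : ∀ f : Fin nd → A, (∀ j, IsNilpotent (f j)) → (∏ j, f j) = 0 := by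
    intro f hf
    have hmem : (∏ j, f j) ∈ (nilradical A) ^ nd :=
      aux_prod_mem_pow _ nd f fun j => mem_nilradical.mpr (hf j)
    rw [hnd0] at hmem
    simpa using hmem
  -- main argument
  intro i
  have hai : a i ≠ 0 := a.ne_zero i
  have hex : ∃ k, a i ∈ N k :=
    ⟨nd, (hNdef nd (a i)).mpr fun f hf => by rw [hprod0 f hf, zero_mul]⟩
  have hkpos : Nat.find hex ≠ 0 := by
    intro h
    exact hai (hN0 _ (h ▸ Nat.find_spec hex))
  obtain ⟨k', hk'⟩ : ∃ k', Nat.find hex = k' + 1 := Nat.exists_eq_succ_of_ne_zero hkpos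
  have hk : a i ∈ N (k' + 1) := hk' ▸ Nat.find_spec hex
  have hmin : a i ∉ N k' := Nat.find_min hex (by omega)
  -- b i is orthogonal to N k'
  have hborth : b i ∈ B.orthogonal (N k') := by
    rw [LinearMap.BilinForm.mem_orthogonal_iff]
    intro x hx
    show B x (b i) = 0
    have hxs := hadapt k' x hx
    have hker : Submodule.span F {y : A | ∃ j, y = a j ∧ a j ∈ N k'} ≤
        LinearMap.ker (μ.comp (LinearMap.mulRight F (b i))) := by
      rw [Submodule.span_le]
      rintro z ⟨j, rfl, hj⟩
      have hji : j ≠ i := fun h => hmin (h ▸ hj)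
      simp [LinearMap.mem_ker, hdual j i, hji]
    have := hker hxs
    simpa [hBapp] using this
  -- hence b i lies in M k'
  have hbM : b i ∈ M k' := by
    rw [hNorth k', LinearMap.BilinForm.orthogonal_orthogonal hnondeg hrefl] at hborth
    exact hborth
  -- a i * b i is in the socle
  have hsoc : ∀ n : A, IsNilpotent n → n * (a i * b i) = 0 := by
    intro n hn
    have h1 : n * b i ∈ M (k' + 1) := hstep k' (b i) hbM n hn
    have h2 := hMkill (k' + 1) (a i) hk (n * b i) h1
    calc n * (a i * b i) = (n * b i) * a i := by ring
      _ = 0 := h2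
  obtain ⟨c, hc⟩ := hsdim _ hsoc
  have h1 : μ (a i * b i) = 1 := by simpa using hdual i i
  rw [hc] at h1 ⊢
  rw [map_smul, hμs, smul_eq_mul, mul_one] at h1
  rw [h1, one_smul]
end

section
/- Let A be a finite-dimensional commutative local Frobenius algebra (A, μ) over an algebraically closed field with one-dimensional socle spanned by s with μ(s) = 1. Let (a_i) be any basis of A and (b_i) its dual basis with respect to the pairing μ(ab). Then for all x ∈ A, Σ_i x a_i b_i = dim(A) · f(x) · s, where f : A → F is the unique algebra homomorphism to F (f(c·1 + nilpotent) = c). -/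
/-- In a local commutative Frobenius algebra over an algebraically closed field
with one-dimensional socle `F·s`, `μ s = 1`: for any basis `(a i)` with dual basis
`(b i)` (`μ (a i * b j) = δ_{ij}`), and `f : A → F` the unique algebra homomorphism,
`∑ i, x * a i * b i = dim A * f x • s` for all `x`. -/
theorem stmt7 {F A : Type*} [Field F] [IsAlgClosed F] [CommRing A] [Algebra F A]
    [FiniteDimensional F A]
    (μ : A →ₗ[F] F) (hnd : ∀ x : A, x ≠ 0 → ∃ y : A, μ (x * y) ≠ 0)
    (hloc : ∀ a : A, ∃ (c : F) (n : A), IsNilpotent n ∧ a = algebraMap F A c + n)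
    (s : A) (hs : s ≠ 0) (hssoc : ∀ a : A, IsNilpotent a → a * s = 0)
    (hsdim : ∀ t : A, (∀ a : A, IsNilpotent a → a * t = 0) → ∃ c : F, t = c • s)
    (hμs : μ s = 1)
    {ι : Type*} [Fintype ι] [DecidableEq ι] (a : Module.Basis ι F A) (b : ι → A)
    (hdual : ∀ i j, μ (a i * b j) = if i = j then 1 else 0)
    (f : A →ₐ[F] F) :
    ∀ x : A, ∑ i, x * (a i * b i) = ((Module.finrank F A : F) * f x) • s := by
  -- f kills nilpotents
  have hf0 : ∀ m : A, IsNilpotent m → f m = 0 := fun m hm =>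
    (hm.map f).eq_zero
  have hfc : ∀ c : F, f (algebraMap F A c) = c := fun c => by
    rw [f.commutes]; simp
  -- coordinates via μ
  have hrepr : ∀ (y : A) (i : ι), a.repr y i = μ (y * b i) := by
    intro y i
    conv_rhs => rw [← a.sum_repr y]
    rw [Finset.sum_mul, map_sum]
    simp [smul_mul_assoc, hdual, Finset.sum_ite_eq']
  -- trace formula
  have htr : ∀ c : A, ∑ i, μ (c * a i * b i) = (Module.finrank F A : F) * f c := by
    intro c
    have h1 : ∑ i, μ (c * a i * b i)
        = LinearMap.trace F A (LinearMap.mulLeft F c) := by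
      rw [LinearMap.trace_eq_matrix_trace F a, Matrix.trace]
      apply Finset.sum_congr rfl
      intro i _
      rw [Matrix.diag_apply, LinearMap.toMatrix_apply, LinearMap.mulLeft_apply, hrepr]
    obtain ⟨c₀, m, hm, rfl⟩ := hloc c
    have h2 : LinearMap.mulLeft F (algebraMap F A c₀ + m)
        = c₀ • LinearMap.id + LinearMap.mulLeft F m := by
      ext x
      simp [LinearMap.mulLeft_apply, add_mul, Algebra.smul_def]
    have h3 : LinearMap.trace F A (LinearMap.mulLeft F m) = 0 := by
      have : IsNilpotent (LinearMap.mulLeft F m) := by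
        obtain ⟨k, hk⟩ := hm
        exact ⟨k, by rw [LinearMap.pow_mulLeft, hk, LinearMap.mulLeft_zero_eq_zero]⟩
      exact (LinearMap.isNilpotent_trace_of_isNilpotent this).eq_zero
    rw [h1, h2, map_add, h3, add_zero, map_smul, LinearMap.trace_id]
    rw [map_add, hfc, hf0 m hm, add_zero, smul_eq_mul, mul_comm]
  -- μ(s*y) = f y
  have hsy : ∀ y : A, μ (s * y) = f y := by
    intro y
    obtain ⟨c, m, hm, rfl⟩ := hloc y
    rw [mul_add, mul_comm s m, hssoc m hm, add_zero, mul_comm s,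
      ← Algebra.smul_def, map_smul, hμs, map_add, hfc, hf0 m hm]
    simp
  intro x
  set n : F := (Module.finrank F A : F)
  by_contra hne
  have hd : ∑ i, x * (a i * b i) - (n * f x) • s ≠ 0 := sub_ne_zero.mpr hne
  obtain ⟨y, hy⟩ := hnd _ hd
  apply hy
  rw [sub_mul, map_sub, Finset.sum_mul, map_sum]
  have : ∀ i, μ (x * (a i * b i) * y) = μ ((x * y) * a i * b i) := by
    intro i; ring_nf
  rw [Finset.sum_congr rfl fun i _ => this i, htr, map_mul, smul_mul_assoc,
    map_smul, hsy, smul_eq_mul]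
  ring
end

section
/- Let A be a finite-dimensional commutative local Frobenius algebra over an algebraically closed field with nonzero nilpotents and one-dimensional socle, with functional μ and socle element s satisfying μ(s)=1. Then the handle element h = Σ_i a_i b_i equals dim(A)·s, and h² = 0 whenever A has a nonzero nilpotent (since s is nilpotent). Consequently, for every x ∈ A, x·h² = 0. -/
/-- In a local commutative Frobenius algebra over an algebraically closed field with
a nonzero nilpotent and one-dimensional socle `F·s`, `μ s = 1`: the handle element
`h = ∑ i, a i * b i` equals `dim A • s`, satisfies `h * h = 0`, and hence
`x * h * h = 0` for every `x`. -/
theorem stmt10 {F A : Type*} [Field F] [IsAlgClosed F] [CommRing A] [Algebra F A]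
    [FiniteDimensional F A]
    (μ : A →ₗ[F] F) (hnd : ∀ x : A, x ≠ 0 → ∃ y : A, μ (x * y) ≠ 0)
    (hloc : ∀ a : A, ∃ (c : F) (n : A), IsNilpotent n ∧ a = algebraMap F A c + n)
    (hnil : ∃ n : A, n ≠ 0 ∧ IsNilpotent n)
    (s : A) (hs : s ≠ 0) (hssoc : ∀ a : A, IsNilpotent a → a * s = 0)
    (hsdim : ∀ t : A, (∀ a : A, IsNilpotent a → a * t = 0) → ∃ c : F, t = c • s)
    (hμs : μ s = 1)
    {ι : Type*} [Fintype ι] [DecidableEq ι] (a : Module.Basis ι F A) (b : ι → A)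
    (hdual : ∀ i j, μ (a i * b j) = if i = j then 1 else 0) :
    (∑ i, a i * b i) = (Module.finrank F A : F) • s ∧
    (∑ i, a i * b i) * (∑ i, a i * b i) = 0 ∧
    ∀ x : A, x * ((∑ i, a i * b i) * (∑ i, a i * b i)) = 0 := by
  classical
  set h : A := ∑ i, a i * b i with hh
  -- coordinates via μ
  have hrepr : ∀ (x : A) (j : ι), a.repr x j = μ (x * b j) := by
    intro x j
    conv_rhs => rw [← a.sum_repr x]
    rw [Finset.sum_mul, map_sum]
    simp only [smul_mul_assoc, map_smul, hdual, smul_eq_mul, mul_ite, mul_one, mul_zero]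
    simp
  -- μ (z * h) is the trace of multiplication by z
  have htr : ∀ z : A, μ (z * h) = LinearMap.trace F A (LinearMap.mulLeft F z) := by
    intro z
    rw [LinearMap.trace_eq_matrix_trace F a, Matrix.trace]
    rw [hh, Finset.mul_sum, map_sum]
    congr 1; ext i
    rw [Matrix.diag_apply, LinearMap.toMatrix_apply, LinearMap.mulLeft_apply,
      hrepr, mul_assoc]
  -- nilpotent elements annihilate h
  have hnilh : ∀ n : A, IsNilpotent n → n * h = 0 := by
    intro n hn
    by_contra hne
    obtain ⟨y, hy⟩ := hnd _ hne
    apply hy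
    have : n * h * y = (n * y) * h := by ring
    rw [this, htr]
    have hny : IsNilpotent (n * y) := by
      obtain ⟨k, hk⟩ := hn; exact ⟨k, by rw [mul_pow, hk, zero_mul]⟩
    have : IsNilpotent (LinearMap.mulLeft F (n * y)) := by
      obtain ⟨k, hk⟩ := hny
      exact ⟨k, by rw [LinearMap.pow_mulLeft, hk, LinearMap.mulLeft_zero_eq_zero]⟩
    exact (LinearMap.isNilpotent_trace_of_isNilpotent this).eq_zero
  -- h = c • s, and μ h = finrank
  obtain ⟨c, hc⟩ := hsdim h hnilh
  have hμh : μ h = (Module.finrank F A : F) := by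
    have := htr 1
    rw [one_mul] at this
    rw [this]
    have : LinearMap.mulLeft F (1 : A) = LinearMap.id := by
      ext x; simp
    rw [this, LinearMap.trace_id]
  have hceq : c = (Module.finrank F A : F) := by
    rw [hc] at hμh
    simpa [hμs] using hμh
  have h1 : h = (Module.finrank F A : F) • s := by rw [hc, hceq]
  -- s is nilpotent
  have hsnil : IsNilpotent s := by
    obtain ⟨cs, n, hn, hsn⟩ := hloc s
    by_cases hcs : cs = 0
    · rw [hsn, hcs, map_zero, zero_add]; exact hn
    · exfalso
      have hunit : IsUnit s := by
        rw [hsn]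
        exact hn.isUnit_add_left_of_commute
          ((algebraMap F A).isUnit_map (isUnit_iff_ne_zero.mpr hcs)) (Commute.all _ _)
      obtain ⟨m, hm0, hmnil⟩ := hnil
      obtain ⟨u, hu⟩ := hunit
      have : m * s = 0 := hssoc m hmnil
      have : m = 0 := by
        have := congrArg (· * (↑u⁻¹ : A)) this
        simpa [← hu, mul_assoc] using this
      exact hm0 this
  have hss : s * s = 0 := hssoc s hsnil
  have h2 : h * h = 0 := by
    rw [h1, smul_mul_smul_comm, hss, smul_zero]
  exact ⟨h1, h2, fun x => by rw [h2, mul_zero]⟩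
end

section
/- Let (A, μ) be a finite-dimensional commutative local Frobenius algebra over an algebraically closed field with dim A ≥ 2, socle F·s, μ(s) = 1, and unique algebra homomorphism f : A → F. Define Z_g : A → A for genus g ≥ 0 by Z_g(x) = x·h^g where h = Σ_i a_i b_i is the handle element. Then Z_1(x) = dim(A)·f(x)·s and Z_g = 0 for all g ≥ 2. -/
/-- In a local commutative Frobenius algebra over an algebraically closed field with
`dim A ≥ 2`, socle `F·s`, `μ s = 1`, and unique algebra homomorphism `f : A → F`:
with handle element `h = ∑ i, a i * b i`, the genus-`g` operator `Z_g x = x * h ^ g`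
satisfies `Z_1 x = dim A * f x • s` and `Z_g = 0` for all `g ≥ 2`. -/
theorem stmt16 {F A : Type*} [Field F] [IsAlgClosed F] [CommRing A] [Algebra F A]
    [FiniteDimensional F A]
    (hdim2 : 2 ≤ Module.finrank F A)
    (μ : A →ₗ[F] F) (hnd : ∀ x : A, x ≠ 0 → ∃ y : A, μ (x * y) ≠ 0)
    (hloc : ∀ a : A, ∃ (c : F) (n : A), IsNilpotent n ∧ a = algebraMap F A c + n)
    (s : A) (hs : s ≠ 0) (hssoc : ∀ a : A, IsNilpotent a → a * s = 0)
    (hsdim : ∀ t : A, (∀ a : A, IsNilpotent a → a * t = 0) → ∃ c : F, t = c • s)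
    (hμs : μ s = 1)
    (f : A →ₐ[F] F)
    {ι : Type*} [Fintype ι] [DecidableEq ι] (a : Module.Basis ι F A) (b : ι → A)
    (hdual : ∀ i j, μ (a i * b j) = if i = j then 1 else 0) :
    (∀ x : A, x * (∑ i, a i * b i) ^ 1 = ((Module.finrank F A : F) * f x) • s) ∧
    ∀ g : ℕ, 2 ≤ g → ∀ x : A, x * (∑ i, a i * b i) ^ g = 0 := by
  classical
  set d : F := (Module.finrank F A : F) with hd
  set h : A := ∑ i, a i * b i with hh
  -- coordinates via the dual basis
  have hrepr : ∀ (z : A) (j : ι), a.repr z j = μ (z * b j) := by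
    intro z j
    conv_rhs => rw [← a.sum_repr z]
    rw [Finset.sum_mul, map_sum]
    simp [smul_mul_assoc, hdual]
  -- f of a nilpotent is 0, and f of (c + n) is c
  have hfnil : ∀ {m : A}, IsNilpotent m → f m = 0 := fun hm =>
    (hm.map f).eq_zero
  have hfc : ∀ (c : F) (m : A), IsNilpotent m → f (algebraMap F A c + m) = c := by
    intro c m hm
    rw [map_add, hfnil hm, add_zero, AlgHom.commutes]
    simp
  -- the trace identity : μ (z * h) = d * f z
  have htr : ∀ z : A, μ (z * h) = d * f z := by
    intro z
    have h1 : μ (z * h) = LinearMap.trace F A (LinearMap.mulLeft F z) := by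
      rw [LinearMap.trace_eq_matrix_trace F a, Matrix.trace]
      rw [hh, Finset.mul_sum, map_sum]
      apply Finset.sum_congr rfl
      intro i _
      rw [Matrix.diag_apply, LinearMap.toMatrix_apply, LinearMap.mulLeft_apply,
        hrepr, mul_assoc]
    obtain ⟨c, m, hm, hzm⟩ := hloc z
    have h2 : LinearMap.mulLeft F z
        = c • LinearMap.id + LinearMap.mulLeft F m := by
      ext w
      simp [hzm, add_mul, Algebra.smul_def]
    have h3 : LinearMap.trace F A (LinearMap.mulLeft F m) = 0 := by
      have : IsNilpotent (LinearMap.mulLeft F m) := by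
        obtain ⟨k, hk⟩ := hm
        exact ⟨k, by rw [LinearMap.pow_mulLeft, hk, LinearMap.mulLeft_zero_eq_zero]⟩
      exact (LinearMap.isNilpotent_trace_of_isNilpotent this).eq_zero
    rw [h1, h2, map_add, map_smul, LinearMap.trace_id, h3, add_zero,
      hzm, hfc c m hm]
    simp [hd, mul_comm]
  -- μ (s * y) = f y
  have hμsy : ∀ y : A, μ (s * y) = f y := by
    intro y
    obtain ⟨c, m, hm, hym⟩ := hloc y
    have : s * y = c • s := by
      rw [hym, mul_add, mul_comm s m, hssoc m hm, add_zero, Algebra.smul_def,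
        mul_comm]
    rw [this, map_smul, hμs, hym, hfc c m hm]
    simp
  -- genus one
  have key : ∀ x : A, x * h = (d * f x) • s := by
    intro x
    by_contra hne
    have hne' : x * h - (d * f x) • s ≠ 0 := sub_ne_zero.mpr hne
    obtain ⟨y, hy⟩ := hnd _ hne'
    apply hy
    rw [sub_mul, map_sub, smul_mul_assoc, map_smul]
    have hxy : x * h * y = (x * y) * h := by ring
    rw [hxy, htr, map_mul, hμsy, smul_eq_mul]
    ring
  refine ⟨fun x => by rw [pow_one]; exact key x, ?_⟩
  -- s is nilpotent (since dim ≥ 2 there is a nonzero nilpotent)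
  have hsnil : IsNilpotent s := by
    obtain ⟨c, m, hm, hsm⟩ := hloc s
    rcases eq_or_ne c 0 with hc | hc
    · rw [hsm, hc, map_zero, zero_add]; exact hm
    · exfalso
      have hu : IsUnit s := by
        rw [hsm]
        exact IsNilpotent.isUnit_add_left_of_commute hm
          (hc.isUnit.map (algebraMap F A)) (Commute.all _ _)
      have : ∃ m0 : A, IsNilpotent m0 ∧ m0 ≠ 0 := by
        by_contra hno
        push_neg at hno
        have hall : ∀ w : A, ∃ c : F, c • (1 : A) = w := by
          intro w
          obtain ⟨c', m', hm', hw⟩ := hloc w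
          rw [hno m' hm', add_zero] at hw
          exact ⟨c', by rw [hw, Algebra.smul_def, mul_one]⟩
        have := finrank_le_one (1 : A) hall
        omega
      obtain ⟨m0, hm0, hm0ne⟩ := this
      exact hm0ne (hu.mul_left_cancel (by rw [mul_comm, hssoc m0 hm0, mul_zero]))
  have hss : s * s = 0 := hssoc s hsnil
  -- h = d • s, so s * h = 0
  have hh1 : h = d • s := by
    have := key 1
    rwa [one_mul, map_one, mul_one] at this
  have hsh : s * h = 0 := by rw [hh1, mul_smul_comm, hss, smul_zero]
  intro g hg x
  obtain ⟨k, rfl⟩ : ∃ k, g = k + 2 := ⟨g - 2, by omega⟩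
  have hsplit : x * h ^ (k + 2) = (x * h) * h * h ^ k := by ring
  rw [hsplit, key x, smul_mul_assoc, smul_mul_assoc, hsh, zero_mul, smul_zero]
end

section
/- Let (A, μ) be a finite-dimensional commutative local Frobenius algebra over an algebraically closed field with nonzero nilradical and one-dimensional socle. The genus-g closed-surface invariant Z(Σ_g) := μ(h^g) (h the handle element) satisfies: Z(sphere) = μ(1), Z(torus) = dim(A), and Z(Σ_g) = 0 for g ≥ 2. -/
/-- In a local commutative Frobenius algebra over an algebraically closed field with
nonzero nilradical and one-dimensional socle `F·s`, `μ s = 1`: the closed-surface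
invariants `Z(Σ_g) = μ (h ^ g)` (with `h = ∑ i, a i * b i` the handle element)
satisfy `Z(sphere) = μ 1`, `Z(torus) = dim A`, and `Z(Σ_g) = 0` for `g ≥ 2`. -/
theorem stmt17 {F A : Type*} [Field F] [IsAlgClosed F] [CommRing A] [Algebra F A]
    [FiniteDimensional F A]
    (μ : A →ₗ[F] F) (hnd : ∀ x : A, x ≠ 0 → ∃ y : A, μ (x * y) ≠ 0)
    (hloc : ∀ a : A, ∃ (c : F) (n : A), IsNilpotent n ∧ a = algebraMap F A c + n)
    (hnil : ∃ n : A, n ≠ 0 ∧ IsNilpotent n)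
    (s : A) (hs : s ≠ 0) (hssoc : ∀ a : A, IsNilpotent a → a * s = 0)
    (hsdim : ∀ t : A, (∀ a : A, IsNilpotent a → a * t = 0) → ∃ c : F, t = c • s)
    (hμs : μ s = 1)
    {ι : Type*} [Fintype ι] [DecidableEq ι] (a : Module.Basis ι F A) (b : ι → A)
    (hdual : ∀ i j, μ (a i * b j) = if i = j then 1 else 0) :
    μ ((∑ i, a i * b i) ^ 0) = μ 1 ∧
    μ ((∑ i, a i * b i) ^ 1) = (Module.finrank F A : F) ∧
    ∀ g : ℕ, 2 ≤ g → μ ((∑ i, a i * b i) ^ g) = 0 := by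
  set h : A := ∑ i, a i * b i with hh
  -- μ (h * x) is the trace of multiplication by x
  have htr : ∀ x : A, μ (h * x) = LinearMap.trace F A (LinearMap.mulLeft F x) := by
    intro x
    rw [LinearMap.trace_eq_matrix_trace F a, Matrix.trace]
    rw [hh, Finset.sum_mul, map_sum]
    apply Finset.sum_congr rfl
    intro i _
    have hx : x * a i = ∑ j, a.repr (x * a i) j • a j := (a.sum_repr _).symm
    have : a i * b i * x = ∑ j, a.repr (x * a i) j • (a j * b i) := by
      rw [show a i * b i * x = (x * a i) * b i by ring]
      conv_lhs => rw [hx]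
      rw [Finset.sum_mul]
      simp [smul_mul_assoc]
    rw [this, map_sum]
    simp only [map_smul, hdual, smul_eq_mul, mul_ite, mul_one, mul_zero]
    rw [Finset.sum_ite_eq' Finset.univ i fun j => a.repr (x * a i) j]
    simp [Matrix.diag, LinearMap.toMatrix_apply, LinearMap.mulLeft_apply]
  -- for nilpotent x, μ (h * x) = 0
  have htr0 : ∀ x : A, IsNilpotent x → μ (h * x) = 0 := by
    intro x hx
    rw [htr x]
    have : IsNilpotent (LinearMap.trace F A (LinearMap.mulLeft F x)) :=
      LinearMap.isNilpotent_trace_of_isNilpotent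
        ((LinearMap.isNilpotent_mulLeft_iff F x).mpr hx)
    exact this.eq_zero
  -- nilpotent x kills h
  have hkill : ∀ x : A, IsNilpotent x → x * h = 0 := by
    intro x hx
    by_contra hne
    obtain ⟨y, hy⟩ := hnd _ hne
    apply hy
    have : x * h * y = h * (x * y) := by ring
    rw [this]
    exact htr0 _ (Commute.isNilpotent_mul_right (Commute.all _ _) hx)
  -- h is nilpotent
  have hA : (1 : A) ≠ 0 := by
    intro h1
    exact hs (by rw [← mul_one s, h1, mul_zero])
  have hhn : IsNilpotent h := by
    obtain ⟨c, m, hm, hcm⟩ := hloc h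
    obtain ⟨n, hn0, hnnil⟩ := hnil
    -- n * h = 0, so c • n = - n * m, iterate
    have key : ∀ k : ℕ, (-c) ^ k • n = n * m ^ k := by
      intro k
      induction k with
      | zero => simp
      | succ k ih =>
        have h0 : n * h = 0 := hkill n hnnil
        rw [hcm] at h0
        have h1 : algebraMap F A c * n + n * m = 0 := by
          rw [mul_add] at h0; rw [← h0]; ring
        have h2 : n * m = (-c) • n := by
          have := eq_neg_of_add_eq_zero_right h1
          rw [this, Algebra.smul_def, map_neg]; ring
        calc (-c) ^ (k+1) • n = (-c) ^ k • ((-c) • n) := by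
              rw [pow_succ, mul_smul]
          _ = (-c) ^ k • (n * m) := by rw [h2]
          _ = ((-c) ^ k • n) * m := by rw [smul_mul_assoc]
          _ = n * m ^ k * m := by rw [ih]
          _ = n * m ^ (k+1) := by ring
    obtain ⟨K, hK⟩ := hm
    have : (-c) ^ K • n = 0 := by rw [key K, hK, mul_zero]
    have hc : (-c) ^ K = 0 ∨ n = 0 := smul_eq_zero.mp this
    have hc0 : c = 0 := by
      rcases hc with hc | hc
      · simpa using neg_eq_zero.mp (pow_eq_zero_iff'.mp hc).1
      · exact absurd hc hn0
    rw [hcm, hc0, map_zero, zero_add]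
    exact ⟨K, hK⟩
  -- h * h = 0
  have hh2 : h * h = 0 := hkill h hhn
  refine ⟨by norm_num, ?_, ?_⟩
  · rw [pow_one, hh, map_sum]
    simp only [hdual]
    simp [Module.finrank_eq_card_basis a]
  · intro g hg
    obtain ⟨k, rfl⟩ := Nat.exists_eq_add_of_le hg
    rw [pow_add, pow_two, hh2, zero_mul, map_zero]
end

section
/- There exist two non-isomorphic finite-dimensional commutative Frobenius algebras (A, μ) and (A', μ') over ℂ with μ(1) = μ'(1), dim A = dim A', and handle elements h, h' satisfying μ(h^g) = μ'(h'^g) for all g ≥ 0. (E.g., A = ℂ[x]/(x³) and A' = ℂ[x,y]/(x², y²) with suitable functionals both have all genus ≥ 2 invariants zero.) -/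
/-- A finite-dimensional commutative Frobenius algebra over `ℂ`. -/
structure FrobAlg where
  carrier : Type
  [commRing : CommRing carrier]
  [alg : Algebra ℂ carrier]
  fin : FiniteDimensional ℂ carrier
  μ : carrier →ₗ[ℂ] ℂ
  nondeg : ∀ x : carrier, x ≠ 0 → ∃ y : carrier, μ (x * y) ≠ 0

attribute [instance] FrobAlg.commRing FrobAlg.alg FrobAlg.fin

/-- `h` is the handle element of `B`: `h = ∑ i, a i * b i` for some basis `(a i)`
with dual basis `(b i)` for the pairing `μ (a * b)`. -/
def FrobAlg.IsHandle (B : FrobAlg) (h : B.carrier) : Prop :=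
  ∃ (ι : Type) (_ : Fintype ι) (_ : DecidableEq ι) (a : Module.Basis ι ℂ B.carrier) (b : ι → B.carrier),
    (∀ i j, B.μ (a i * b j) = if i = j then 1 else 0) ∧ h = ∑ i, a i * b i

lemma handle_mul (B : FrobAlg) {h : B.carrier} (hh : B.IsHandle h) (x : B.carrier) :
    B.μ (x * h) = LinearMap.trace ℂ B.carrier (LinearMap.mulLeft ℂ x) := by
  obtain ⟨ι, _, _, a, b, hab, rfl⟩ := hh
  rw [Finset.mul_sum, map_sum, LinearMap.trace_eq_matrix_trace ℂ a, Matrix.trace]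
  refine Finset.sum_congr rfl fun i _ => ?_
  rw [Matrix.diag_apply, LinearMap.toMatrix_apply, LinearMap.mulLeft_apply]
  conv_lhs => rw [← mul_assoc, ← a.sum_repr (x * a i)]
  rw [Finset.sum_mul, map_sum]
  simp only [smul_mul_assoc, map_smul, hab, smul_eq_mul, mul_ite, mul_one, mul_zero]
  rw [Finset.sum_ite_eq' Finset.univ i]
  simp

lemma handle_unique (B : FrobAlg) {h h' : B.carrier} (hh : B.IsHandle h)
    (hh' : B.IsHandle h') : h = h' := by
  by_contra hne
  obtain ⟨y, hy⟩ := B.nondeg (h - h') (sub_ne_zero.mpr hne)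
  apply hy
  have e : B.μ (y * h) = B.μ (y * h') := by
    rw [handle_mul B hh, handle_mul B hh']
  rw [sub_mul, map_sub, mul_comm h y, mul_comm h' y, e, sub_self]

open Polynomial
noncomputable section
set_option synthInstance.maxHeartbeats 1000000
set_option maxHeartbeats 1000000
set_option maxRecDepth 8000

abbrev A : Type := AdjoinRoot (X ^ 4 : ℂ[X])

lemma monic4 : (X ^ 4 : ℂ[X]).Monic := monic_X_pow 4

def pbA : PowerBasis ℂ A := AdjoinRoot.powerBasis' monic4

lemma pbA_dim : pbA.dim = 4 := by
  simp [pbA, AdjoinRoot.powerBasis']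

def bA : Module.Basis (Fin 4) ℂ A := pbA.basis.reindex (finCongr pbA_dim)

abbrev r : A := AdjoinRoot.root _

lemma bA_apply (i : Fin 4) : bA i = r ^ (i : ℕ) := by
  rw [bA, Module.Basis.reindex_apply, pbA.basis_eq_pow]
  rfl

lemma r4 : r ^ 4 = 0 := by
  rw [show (r : A) ^ 4 = AdjoinRoot.mk _ (X ^ 4) by rw [map_pow, AdjoinRoot.mk_X],
    AdjoinRoot.mk_self]

instance : FiniteDimensional ℂ A := Module.Basis.finiteDimensional_of_finite bA

def μA : A →ₗ[ℂ] ℂ := bA.coord 3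

lemma μA_pow (m : ℕ) : μA (r ^ m) = if m = 3 then 1 else 0 := by
  by_cases hm : m ≤ 3
  · have : r ^ m = bA ⟨m, by omega⟩ := by rw [bA_apply]
    rw [this, μA, Module.Basis.coord_apply, Module.Basis.repr_self]
    interval_cases m <;> simp [Finsupp.single_apply]
  · have : r ^ m = 0 := by
      have : r ^ m = r ^ 4 * r ^ (m - 4) := by rw [← pow_add]; congr 1; omega
      rw [this, r4, zero_mul]
    rw [this, map_zero]
    have : m ≠ 3 := by omega
    simp [this]

lemma key (x : A) (k : ℕ) (hk : k ≤ 3) :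
    μA (x * r ^ k) = bA.repr x ⟨3 - k, by omega⟩ := by
  conv_lhs => rw [← bA.sum_repr x]
  rw [Finset.sum_mul, map_sum]
  simp only [smul_mul_assoc, map_smul, bA_apply, ← pow_add, μA_pow, smul_eq_mul,
    mul_ite, mul_one, mul_zero]
  rw [Fin.sum_univ_four]
  interval_cases k <;>
    norm_num [show ((0:Fin 4):ℕ) = 0 from rfl, show ((1:Fin 4):ℕ) = 1 from rfl,
      show ((2:Fin 4):ℕ) = 2 from rfl, show ((3:Fin 4):ℕ) = 3 from rfl] <;>
    congr 1

lemma nondegA : ∀ x : A, x ≠ 0 → ∃ y : A, μA (x * y) ≠ 0 := by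
  intro x hx
  by_contra hy
  push_neg at hy
  apply hx
  have h0 := hy (r ^ 3); rw [key x 3 (by norm_num)] at h0
  have h1 := hy (r ^ 2); rw [key x 2 (by norm_num)] at h1
  have h2 := hy (r ^ 1); rw [key x 1 (by norm_num)] at h2
  have h3 := hy (r ^ 0); rw [key x 0 (by norm_num)] at h3
  have : bA.repr x = 0 := by
    ext i
    fin_cases i <;> simpa using by first | exact h0 | exact h1 | exact h2 | exact h3
  simpa using (LinearEquiv.map_eq_zero_iff bA.repr).mp this

lemma handleA :
    (∀ i j : Fin 4, μA (bA i * r ^ (3 - (j:ℕ))) = if i = j then 1 else 0) ∧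
      (∑ i : Fin 4, bA i * r ^ (3 - (i:ℕ))) = (4 : ℂ) • r ^ 3 := by
  constructor
  · intro i j
    rw [bA_apply, ← pow_add, μA_pow]
    fin_cases i <;> fin_cases j <;> norm_num [Fin.ext_iff]
  · rw [Fin.sum_univ_four]
    simp only [bA_apply]
    norm_num [show ((0:Fin 4):ℕ) = 0 from rfl, show ((1:Fin 4):ℕ) = 1 from rfl,
      show ((2:Fin 4):ℕ) = 2 from rfl, show ((3:Fin 4):ℕ) = 3 from rfl, ← pow_add]
    ring_nf
    simp [Algebra.smul_def, map_ofNat]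
    ring

lemma muA_one : μA 1 = 0 := by
  have := μA_pow 0
  simpa using this

lemma muA_h_pow (g : ℕ) : μA (((4 : ℂ) • r ^ 3) ^ g) = if g = 1 then 4 else 0 := by
  match g with
  | 0 => simpa using muA_one
  | 1 => simp [μA_pow]
  | (n+2) =>
    have : ((4 : ℂ) • r ^ 3) ^ (n + 2) = (4:ℂ)^(n+2) • (r ^ 4 * r ^ (3*(n+2) - 4)) := by
      rw [_root_.smul_pow, ← pow_mul, ← pow_add]
      congr 2
      omega
    rw [this, r4, zero_mul, smul_zero, map_zero]
    simp

lemma r3_ne : (r ^ 3 : A) ≠ 0 := by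
  intro h
  have := μA_pow 3
  rw [h] at this
  simp at this

open TrivSqZeroExt
noncomputable section
set_option synthInstance.maxHeartbeats 1000000
set_option maxHeartbeats 1000000
set_option maxRecDepth 8000

abbrev D : Type := DualNumber ℂ
abbrev A' : Type := DualNumber D

instance iCR : CommRing A' := inferInstance
instance iALG : Algebra ℂ A' := inferInstance

def X' : A' := TrivSqZeroExt.inl DualNumber.eps
def Y' : A' := DualNumber.eps

lemma X'_sq : X' * X' = 0 := by simp [X', ← inl_mul, DualNumber.eps_mul_eps]
lemma Y'_sq : Y' * Y' = 0 := by simp [Y', DualNumber.eps_mul_eps]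
lemma XY' : X' * Y' = TrivSqZeroExt.inr (DualNumber.eps : D) := by
  rw [X', Y', show (DualNumber.eps : A') = TrivSqZeroExt.inr 1 from rfl, inl_mul_inr,
    smul_eq_mul, mul_one]

def E : A' ≃ₗ[ℂ] (Fin 4 → ℂ) where
  toFun z := ![z.fst.fst, z.fst.snd, z.snd.fst, z.snd.snd]
  map_add' x y := by funext i; fin_cases i <;> simp
  map_smul' c x := by funext i; fin_cases i <;> simp
  invFun v := ⟨⟨v 0, v 1⟩, ⟨v 2, v 3⟩⟩
  left_inv z := rfl
  right_inv v := by funext i; fin_cases i <;> rfl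

lemma E_apply (z : A') : E z = ![z.fst.fst, z.fst.snd, z.snd.fst, z.snd.snd] := rfl

def bA' : Module.Basis (Fin 4) ℂ A' := Module.Basis.ofEquivFun E

def μ' : A' →ₗ[ℂ] ℂ := bA'.coord 3

def mono : Fin 4 → A' := ![1, X', Y', X' * Y']

lemma bA'_apply (i : Fin 4) : bA' i = mono i := by
  rw [show bA' i = E.symm (Pi.single i 1) from congrFun (Module.Basis.coe_ofEquivFun E) i]
  apply E.injective
  rw [E.apply_symm_apply]
  funext j
  fin_cases i <;> fin_cases j <;>
    simp [E_apply, mono, X', Y', Pi.single_apply]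

lemma μ'_apply (z : A') : μ' z = z.snd.snd := rfl

lemma X'_pow : X' ^ 2 = 0 := by rw [sq, X'_sq]
lemma Y'_pow : Y' ^ 2 = 0 := by rw [sq, Y'_sq]
lemma pX_XY : X' * (X' * Y') = 0 := by rw [← mul_assoc, X'_sq, zero_mul]
lemma pY_XY : Y' * (X' * Y') = 0 := by
  rw [mul_comm X' Y', ← mul_assoc, Y'_sq, zero_mul]
lemma XY_pow : (X' * Y') ^ 2 = 0 := by
  rw [sq, mul_assoc, pY_XY, mul_zero]
lemma pXY_XY : (X' * Y') * (X' * Y') = 0 := by rw [mul_assoc, pY_XY, mul_zero]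
lemma pXY_Y : (X' * Y') * Y' = 0 := by rw [mul_assoc, Y'_sq, mul_zero]
lemma pXY_X : (X' * Y') * X' = 0 := by rw [mul_assoc, mul_comm Y' X', pX_XY]

lemma μ'_one : μ' 1 = 0 := rfl
lemma μ'_X : μ' X' = 0 := rfl
lemma μ'_Y : μ' Y' = 0 := rfl
lemma μ'_XY : μ' (X' * Y') = 1 := by rw [XY']; rfl

def mb : Fin 4 → A' := ![X' * Y', Y', X', 1]

lemma handleA' :
    (∀ i j : Fin 4, μ' (bA' i * mb j) = if i = j then 1 else 0) ∧
      (∑ i : Fin 4, bA' i * mb i) = (4 : ℂ) • (X' * Y') := by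
  constructor
  · intro i j
    rw [bA'_apply]
    fin_cases i <;> fin_cases j <;>
      simp [mono, mb, μ'_one, μ'_X, μ'_Y, μ'_XY, X'_sq, Y'_sq, pX_XY, pY_XY,
        pXY_XY, pXY_Y, pXY_X, mul_comm Y' X']
  · rw [Fin.sum_univ_four, bA'_apply, bA'_apply, bA'_apply, bA'_apply]
    simp only [mono, mb]
    norm_num [mul_comm Y' X', Matrix.cons_val_two, Matrix.cons_val_three]
    module

lemma key' (x : A') (k : Fin 4) : μ' (x * mb k) = bA'.repr x k := by
  conv_lhs => rw [← bA'.sum_repr x]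
  rw [Finset.sum_mul, map_sum]
  rw [Fin.sum_univ_four]
  fin_cases k <;>
    simp [bA'_apply, mono, mb, smul_mul_assoc, μ'_one, μ'_X, μ'_Y, μ'_XY, X'_sq, Y'_sq,
      pX_XY, pY_XY, pXY_XY, pXY_Y, pXY_X, mul_comm Y' X']

lemma nondegA' : ∀ x : A', x ≠ 0 → ∃ y : A', μ' (x * y) ≠ 0 := by
  intro x hx
  by_contra hy
  push_neg at hy
  apply hx
  have h0 := (key' x 0).symm.trans (hy (mb 0))
  have h1 := (key' x 1).symm.trans (hy (mb 1))
  have h2 := (key' x 2).symm.trans (hy (mb 2))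
  have h3 := (key' x 3).symm.trans (hy (mb 3))
  have : bA'.repr x = 0 := by
    ext i
    fin_cases i <;> simpa using by first | exact h0 | exact h1 | exact h2 | exact h3
  simpa using (LinearEquiv.map_eq_zero_iff bA'.repr).mp this

lemma X'_cube : X' ^ 3 = 0 := by
  rw [show (3:ℕ) = 2 + 1 from rfl, pow_succ, X'_pow, zero_mul]
lemma Y'_cube : Y' ^ 3 = 0 := by
  rw [show (3:ℕ) = 2 + 1 from rfl, pow_succ, Y'_pow, zero_mul]
lemma XY_cube : (X' * Y') ^ 3 = 0 := by
  rw [show (3:ℕ) = 2 + 1 from rfl, pow_succ, XY_pow, zero_mul]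

lemma cube_zero (z : A') (h4 : z ^ 4 = 0) : z ^ 3 = 0 := by
  have h0 : (z.fst.fst) = 0 := by
    have hp : (z.fst.fst) ^ 4 = 0 := by
      have := congrArg (fun w : A' => w.fst.fst) h4
      simpa [fst_pow] using this
    exact pow_eq_zero_iff (n := 4) (by norm_num) |>.mp hp
  set c : Fin 4 → ℂ := fun i => bA'.repr z i with hc
  have hz : z = c 0 • 1 + c 1 • X' + c 2 • Y' + c 3 • (X' * Y') := by
    conv_lhs => rw [← bA'.sum_repr z]
    rw [Fin.sum_univ_four, bA'_apply, bA'_apply, bA'_apply, bA'_apply]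
    rfl
  have hc0 : c 0 = 0 := by
    have he : bA'.repr z 0 = E z 0 := Module.Basis.ofEquivFun_repr_apply E z 0
    rw [hc]
    exact he.trans h0
  rw [hz, hc0, zero_smul, zero_add]
  ring_nf
  simp [_root_.smul_pow, smul_mul_assoc, mul_smul_comm, X'_pow, Y'_pow, XY_pow, pXY_XY, pow_succ,
    X'_cube, Y'_cube, XY_cube]

instance : FiniteDimensional ℂ A' := Module.Basis.finiteDimensional_of_finite bA'

lemma finrankA : Module.finrank ℂ A = 4 := by
  rw [Module.finrank_eq_card_basis bA]; simp

lemma finrankA' : Module.finrank ℂ A' = 4 := by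
  rw [Module.finrank_eq_card_basis bA']; simp

lemma μ'_h_pow (g : ℕ) : μ' (((4 : ℂ) • (X' * Y')) ^ g) = if g = 1 then 4 else 0 := by
  match g with
  | 0 => simpa using μ'_one
  | 1 => simp [μ'_XY]
  | (n+2) =>
    have h2 : ((4 : ℂ) • (X' * Y')) ^ (n + 2)
        = (4:ℂ)^(n+2) • ((X' * Y') ^ 2 * (X' * Y') ^ n) := by
      rw [_root_.smul_pow, ← pow_add]
      congr 2
      omega
    rw [h2, XY_pow, zero_mul, smul_zero, map_zero]
    simp

abbrev BA : FrobAlg := { carrier := A, fin := inferInstance, μ := μA, nondeg := nondegA }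

abbrev BA' : FrobAlg := { carrier := A', fin := inferInstance, μ := μ', nondeg := nondegA' }

/-- There exist two non-isomorphic finite-dimensional commutative Frobenius algebras
over `ℂ` with the same `μ(1)`, the same dimension, and the same closed-surface
invariants `μ (h ^ g)` for all genera `g ≥ 0` (where `h` is the handle element). -/
theorem stmt18 :
    ∃ B B' : FrobAlg,
      B.μ 1 = B'.μ 1 ∧
      Module.finrank ℂ B.carrier = Module.finrank ℂ B'.carrier ∧
      (∀ (h : B.carrier) (h' : B'.carrier), B.IsHandle h → B'.IsHandle h' →
        ∀ g : ℕ, B.μ (h ^ g) = B'.μ (h' ^ g)) ∧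
      ¬ ∃ φ : B.carrier ≃ₐ[ℂ] B'.carrier, ∀ x : B.carrier, B'.μ (φ x) = B.μ x := by
  refine ⟨BA, BA', ?_, ?_, ?_, ?_⟩
  · show μA 1 = μ' 1
    rw [muA_one, μ'_one]
  · show Module.finrank ℂ A = Module.finrank ℂ A'
    rw [finrankA, finrankA']
  · intro h h' hh hh' g
    have e1 : h = (4:ℂ) • r ^ 3 :=
      handle_unique BA hh
        ⟨Fin 4, inferInstance, inferInstance, bA, fun i => r ^ (3 - (i:ℕ)),
          handleA.1, handleA.2.symm⟩
    have e2 : h' = (4:ℂ) • (X' * Y') :=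
      handle_unique BA' hh'
        ⟨Fin 4, inferInstance, inferInstance, bA', mb, handleA'.1, handleA'.2.symm⟩
    rw [e1, e2]
    show μA (((4:ℂ) • r ^ 3) ^ g) = μ' (((4:ℂ) • (X' * Y')) ^ g)
    rw [muA_h_pow, μ'_h_pow]
  · rintro ⟨φ, -⟩
    have hz4 : (φ r : A') ^ 4 = 0 := by rw [← map_pow, r4, map_zero]
    have hz3 : (φ r : A') ^ 3 = 0 := cube_zero _ hz4
    have h30 : φ (r ^ 3) = 0 := by rw [map_pow, hz3]
    exact r3_ne (φ.injective (h30.trans (map_zero φ).symm))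
end
end
end
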